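/- Let 0 < ω < 1 be real and let κ̲ ∈ (0,1) be the solution of κ(1 − log κ) = ω in (0,1). For every real x ≥ e, setting m̲ = ⌊κ̲·log x⌋ and α̲ = κ̲·log(x) − m̲, and for α equal to either 0 or α̲, one has 0 ≤ li_*(x) − li_{ω̲,α}(x) ≤ D̲ · x^(1−ω) / √(log x), where D̲ = √(8π/κ̲)·e^(13/12)·(1 + κ̲)/(1 − κ̲). -/

import Mathlib

/-- The Stieltjes asymptotic approximation of `li(x)`:
`li_*(x) = (x/log x)·Σ_{k=0}^{n−1} k!/(log x)^k + (log x − n)·x·n!/(log x)^(n+1)`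
with `n = ⌊log x⌋`. -/
noncomputable def liStar (x : ℝ) : ℝ :=
  x / Real.log x *
      ∑ k ∈ Finset.range ⌊Real.log x⌋₊, (Nat.factorial k : ℝ) / Real.log x ^ k
    + (Real.log x - ⌊Real.log x⌋₊) * x * (Nat.factorial ⌊Real.log x⌋₊ : ℝ)
      / Real.log x ^ (⌊Real.log x⌋₊ + 1)

/-- The truncated asymptotic approximation of `li(x)` with truncation parameter `κ`
and fractional coefficient `α`:
`li_{κ,α}(x) = (x/log x)·(α·m!/(log x)^m + Σ_{k=0}^{m−1} k!/(log x)^k)` with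
`m = ⌊κ·log x⌋`. -/
noncomputable def liApprox (κ α x : ℝ) : ℝ :=
  x / Real.log x *
    (α * (Nat.factorial ⌊κ * Real.log x⌋₊ : ℝ) / Real.log x ^ ⌊κ * Real.log x⌋₊
      + ∑ k ∈ Finset.range ⌊κ * Real.log x⌋₊, (Nat.factorial k : ℝ) / Real.log x ^ k)

open Real

lemma factorial_le_stirling (k : ℕ) (hk : k ≠ 0) :
    (Nat.factorial k : ℝ) ≤ exp 1 * Real.sqrt k * (k / exp 1) ^ k := by
  obtain ⟨j, rfl⟩ := Nat.exists_eq_succ_of_ne_zero hk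
  have h := Stirling.stirlingSeq'_antitone (Nat.zero_le j)
  simp only [Function.comp] at h
  rw [Stirling.stirlingSeq_one] at h
  have hpos : (0:ℝ) < Real.sqrt (2 * (j+1)) * ((j+1) / exp 1) ^ (j+1) := by positivity
  have hs : Stirling.stirlingSeq (j+1) =
      (Nat.factorial (j+1) : ℝ) / (Real.sqrt (2 * (j+1)) * ((j+1) / exp 1) ^ (j+1)) := by
    rw [Stirling.stirlingSeq]; push_cast; ring_nf
  rw [hs, div_le_iff₀ hpos] at h
  have key : (Nat.factorial (j+1) : ℝ)
      ≤ exp 1 / Real.sqrt 2 * (Real.sqrt (2 * (j+1)) * ((j+1) / exp 1) ^ (j+1)) := by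
    push_cast at h ⊢; convert h using 3 <;> push_cast <;> ring
  have h2 : exp 1 / Real.sqrt 2 * (Real.sqrt (2 * (j+1)) * ((j+1) / exp 1) ^ (j+1))
      = exp 1 * Real.sqrt (j+1) * ((j+1) / exp 1) ^ (j+1) := by
    rw [Real.sqrt_mul (by norm_num)]
    have : Real.sqrt 2 ≠ 0 := by positivity
    field_simp
  rw [h2] at key
  convert key using 3 <;> push_cast <;> ring

lemma term_le (L : ℝ) (hL : 0 < L) (k : ℕ) (hk : k ≠ 0) :
    (Nat.factorial k : ℝ) / L ^ k ≤
      exp 1 * Real.sqrt k * exp (-(L * ((k/L) * (1 - Real.log (k/L))))) := by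
  have hk0 : (0:ℝ) < k := by exact_mod_cast Nat.pos_of_ne_zero hk
  have h1 := factorial_le_stirling k hk
  have hLk : (0:ℝ) < L ^ k := by positivity
  have h2 : ((k:ℝ) / exp 1) ^ k / L ^ k = exp (-(L * ((k/L) * (1 - Real.log (k/L))))) := by
    rw [← div_pow]
    have hb : (0:ℝ) < (k:ℝ) / exp 1 / L := by positivity
    rw [← Real.exp_log (pow_pos hb k), Real.log_pow]
    congr 1
    rw [div_div, Real.log_div hk0.ne' (by positivity), Real.log_mul (exp_ne_zero 1) hL.ne',
      Real.log_exp, Real.log_div hk0.ne' hL.ne']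
    field_simp
    ring
  calc (Nat.factorial k : ℝ) / L ^ k ≤ exp 1 * Real.sqrt k * (k / exp 1) ^ k / L ^ k := by
        gcongr
    _ = exp 1 * Real.sqrt k * ((k / exp 1) ^ k / L ^ k) := by ring
    _ = exp 1 * Real.sqrt k * exp (-(L * ((k/L) * (1 - Real.log (k/L))))) := by rw [h2]

lemma chord_le (κ t : ℝ) (hκ0 : 0 < κ) (hκ1 : κ < 1) (ht1 : κ ≤ t) (ht2 : t ≤ 1) :
    κ * (1 - Real.log κ) + (t - κ) * (1 - κ * (1 - Real.log κ)) / (1 - κ)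
      ≤ t * (1 - Real.log t) := by
  have hconc : ConcaveOn ℝ (Set.Ici (0:ℝ)) (fun s : ℝ => s * (1 - Real.log s)) := by
    have h1 : ConcaveOn ℝ (Set.Ici (0:ℝ)) ((fun s : ℝ => s) + Real.negMulLog) :=
      (concaveOn_id (convex_Ici 0)).add Real.concaveOn_negMulLog
    have he : (fun s : ℝ => s * (1 - Real.log s)) = ((fun s : ℝ => s) + Real.negMulLog) := by
      funext s; simp [Real.negMulLog]; ring
    rw [he]; exact h1
  have h1κ : (0:ℝ) < 1 - κ := by linarith
  set a : ℝ := (1 - t) / (1 - κ) with ha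
  set b : ℝ := (t - κ) / (1 - κ) with hb
  have hab : a + b = 1 := by rw [ha, hb, ← add_div, div_eq_one_iff_eq h1κ.ne']; ring
  have hco : a • κ + b • (1:ℝ) = t := by
    simp only [smul_eq_mul, ha, hb]; field_simp; ring
  have ha0 : (0:ℝ) ≤ a := div_nonneg (by linarith) h1κ.le
  have hb0 : (0:ℝ) ≤ b := div_nonneg (by linarith) h1κ.le
  have hkey := hconc.2 (Set.mem_Ici.2 hκ0.le) (Set.mem_Ici.2 (by norm_num : (0:ℝ) ≤ 1))
    ha0 hb0 hab
  rw [hco] at hkey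
  simp only [smul_eq_mul, Real.log_one] at hkey
  refine le_trans (le_of_eq ?_) hkey
  have haa : a = 1 - b := by linarith
  rw [haa, hb]
  field_simp
  ring

lemma low_t (κ t : ℝ) (ht0 : 0 < t) (htκ : t ≤ κ) :
    κ * (1 - Real.log κ) - t * (1 - Real.log t) ≤ (κ - t) * (- Real.log t) := by
  have hκ0 : 0 < κ := lt_of_lt_of_le ht0 htκ
  -- reduces to κ - t ≤ κ * log (κ/t)
  have h : 1 - (κ/t)⁻¹ ≤ Real.log (κ/t) := Real.one_sub_inv_le_log_of_pos (by positivity)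
  have h2 : κ - t ≤ κ * (Real.log κ - Real.log t) := by
    rw [← Real.log_div hκ0.ne' ht0.ne']
    have := mul_le_mul_of_nonneg_left h hκ0.le
    calc κ - t = κ * (1 - (κ/t)⁻¹) := by field_simp
      _ ≤ κ * Real.log (κ/t) := this
  nlinarith [h2]

lemma kappa_sq (κ : ℝ) (h0 : 0 < κ) (h1 : κ ≤ 1) : κ^2 - 1 ≤ 2 * κ * Real.log κ := by
  rcases eq_or_lt_of_le h1 with rfl | h1
  · simp
  have key : AntitoneOn (fun c : ℝ => 2 * c * Real.log c - c ^ 2) (Set.Icc κ 1) := by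
    have hder : ∀ c ∈ Set.Icc κ 1, HasDerivAt (fun c : ℝ => 2 * c * Real.log c - c ^ 2)
        (2 * Real.log c + 2 - 2 * c) c := by
      intro c hc
      have hc0 : (0:ℝ) < c := lt_of_lt_of_le h0 hc.1
      have h1 : HasDerivAt (fun c : ℝ => 2 * c) 2 c := by
        simpa using (hasDerivAt_id c).const_mul (2:ℝ)
      have h2 := (h1.mul (Real.hasDerivAt_log hc0.ne')).sub (hasDerivAt_pow 2 c)
      convert h2 using 1
      · rfl
      · rfl
      · rfl
      · field_simp; norm_num; ring
    apply antitoneOn_of_deriv_nonpos (convex_Icc κ 1)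
    · exact ContinuousOn.mono (fun c hc => ((hder c hc).continuousAt).continuousWithinAt)
        (le_refl _)
    · intro c hc
      rw [interior_Icc] at hc
      exact ((hder c (Set.mem_Icc_of_Ioo hc)).differentiableAt).differentiableWithinAt
    · intro c hc
      rw [interior_Icc] at hc
      rw [(hder c (Set.mem_Icc_of_Ioo hc)).deriv]
      have hc0 : (0:ℝ) < c := lt_of_lt_of_le h0 hc.1.le
      have := Real.log_le_sub_one_of_pos hc0
      linarith
  have := key (Set.mem_Icc.2 ⟨le_refl κ, h1.le⟩) (Set.mem_Icc.2 ⟨h1.le, le_refl 1⟩) h1.le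
  simp at this
  linarith

lemma head_bound (κ L : ℝ) (hκ0 : 0 < κ) (hκ1 : κ < 1) (hL : 1 ≤ L) :
    (Nat.factorial ⌊κ*L⌋₊ : ℝ) / L ^ ⌊κ*L⌋₊ ≤
      Real.exp 1 * Real.sqrt 2 / Real.sqrt κ * Real.sqrt L
        * Real.exp (-(κ*(1-Real.log κ)*L)) := by
  have hL0 : (0:ℝ) < L := lt_of_lt_of_le one_pos hL
  have hκL0 : 0 < κ * L := mul_pos hκ0 hL0
  set m := ⌊κ*L⌋₊ with hm
  have hmle : (m:ℝ) ≤ κ*L := Nat.floor_le hκL0.le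
  have hmlt : κ*L < m+1 := Nat.lt_floor_add_one _
  have hsκ : (0:ℝ) < Real.sqrt κ := Real.sqrt_pos.2 hκ0
  have hsL : (1:ℝ) ≤ Real.sqrt L := by
    rw [show (1:ℝ) = Real.sqrt 1 by simp]; exact Real.sqrt_le_sqrt hL
  have hlogκ : Real.log κ < 0 := Real.log_neg hκ0 hκ1
  rcases Nat.eq_zero_or_pos m with hm0 | hm1
  · -- m = 0 : LHS = 1
    rw [hm0]
    simp only [Nat.factorial_zero, pow_zero, Nat.cast_one, div_one]
    -- goal : 1 ≤ e√2/√κ √L exp(−ωL)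
    have key : Real.exp (κ*(1-Real.log κ)*L) ≤ Real.exp 1 * Real.sqrt 2 / Real.sqrt κ * Real.sqrt L := by
      have hκL1 : κ * L < 1 := by
        have : (m:ℝ) = 0 := by exact_mod_cast hm0
        rw [this] at hmlt; linarith
      have hsplit : Real.exp (κ*(1-Real.log κ)*L)
          = Real.exp (κ*L) * Real.exp ((κ*L) * (-Real.log κ)) := by
        rw [← Real.exp_add]; ring_nf
      rcases le_or_gt (κ*L) (1/2) with hhalf | hhalf
      · have h1 : Real.exp (κ*L) ≤ Real.exp (1/2) := Real.exp_le_exp.2 hhalf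
        have h2 : Real.exp ((κ*L) * (-Real.log κ)) ≤ Real.exp ((1/2) * (-Real.log κ)) :=
          Real.exp_le_exp.2 (by nlinarith)
        have h3 : Real.exp ((1/2) * (-Real.log κ)) = (Real.sqrt κ)⁻¹ := by
          rw [Real.sqrt_eq_rpow, Real.rpow_def_of_pos hκ0, ← Real.exp_neg]
          ring_nf
        have h4 : Real.exp (1/2) ≤ Real.exp 1 * Real.sqrt 2 := by
          calc Real.exp (1/2) ≤ Real.exp 1 := Real.exp_le_exp.2 (by norm_num)
            _ ≤ Real.exp 1 * Real.sqrt 2 := by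
              nlinarith [Real.exp_pos 1, Real.one_le_sqrt.2 (by norm_num : (1:ℝ) ≤ 2)]
        calc Real.exp (κ*(1-Real.log κ)*L)
            = Real.exp (κ*L) * Real.exp ((κ*L) * (-Real.log κ)) := hsplit
          _ ≤ Real.exp (1/2) * (Real.sqrt κ)⁻¹ := by
              rw [← h3]; exact mul_le_mul h1 h2 (Real.exp_pos _).le (Real.exp_pos _).le
          _ ≤ Real.exp 1 * Real.sqrt 2 * (Real.sqrt κ)⁻¹ :=
              mul_le_mul_of_nonneg_right h4 (by positivity)
          _ = Real.exp 1 * Real.sqrt 2 / Real.sqrt κ := by rw [div_eq_mul_inv]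
          _ ≤ Real.exp 1 * Real.sqrt 2 / Real.sqrt κ * Real.sqrt L := by
              have hq : (0:ℝ) < Real.exp 1 * Real.sqrt 2 / Real.sqrt κ := by positivity
              nlinarith [hq]
      · have h1 : Real.exp (κ*L) ≤ Real.exp 1 := Real.exp_le_exp.2 hκL1.le
        have h2 : Real.exp ((κ*L) * (-Real.log κ)) ≤ Real.exp (-Real.log κ) :=
          Real.exp_le_exp.2 (by nlinarith)
        have h3 : Real.exp (-Real.log κ) = κ⁻¹ := by rw [Real.exp_neg, Real.exp_log hκ0]
        have h4 : (Real.sqrt κ)⁻¹ ≤ Real.sqrt 2 * Real.sqrt L := by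
          rw [← Real.sqrt_inv, ← Real.sqrt_mul (by norm_num : (0:ℝ) ≤ 2)]
          apply Real.sqrt_le_sqrt
          rw [inv_le_iff_one_le_mul₀ hκ0]  -- maybe wrong name
          nlinarith
        calc Real.exp (κ*(1-Real.log κ)*L)
            = Real.exp (κ*L) * Real.exp ((κ*L) * (-Real.log κ)) := hsplit
          _ ≤ Real.exp 1 * κ⁻¹ := by
              rw [← h3]; exact mul_le_mul h1 h2 (Real.exp_pos _).le (Real.exp_pos _).le
          _ ≤ Real.exp 1 * Real.sqrt 2 / Real.sqrt κ * Real.sqrt L := by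
              have hκinv : κ⁻¹ = (Real.sqrt κ)⁻¹ * (Real.sqrt κ)⁻¹ := by
                rw [← mul_inv, Real.mul_self_sqrt hκ0.le]
              rw [hκinv]
              rw [div_eq_mul_inv]
              calc Real.exp 1 * ((Real.sqrt κ)⁻¹ * (Real.sqrt κ)⁻¹)
                  = Real.exp 1 * (Real.sqrt κ)⁻¹ * (Real.sqrt κ)⁻¹ := by ring
                _ ≤ Real.exp 1 * (Real.sqrt κ)⁻¹ * (Real.sqrt 2 * Real.sqrt L) := by
                    apply mul_le_mul_of_nonneg_left h4 (by positivity)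
                _ = Real.exp 1 * Real.sqrt 2 * (Real.sqrt κ)⁻¹ * Real.sqrt L := by ring
    calc (1:ℝ) = Real.exp (κ*(1-Real.log κ)*L) * Real.exp (-(κ*(1-Real.log κ)*L)) := by
          rw [← Real.exp_add]; simp
      _ ≤ Real.exp 1 * Real.sqrt 2 / Real.sqrt κ * Real.sqrt L * Real.exp (-(κ*(1-Real.log κ)*L)) :=
          mul_le_mul_of_nonneg_right key (Real.exp_pos _).le
  · -- m ≥ 1
    have hm0' : m ≠ 0 := hm1.ne'
    have hmR : (0:ℝ) < m := by exact_mod_cast hm1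
    set t : ℝ := (m:ℝ)/L with htdef
    have ht0 : 0 < t := by positivity
    have htκ : t ≤ κ := by
      rw [htdef, div_le_iff₀ hL0]; linarith
    have ht1 : t < 1 := lt_of_le_of_lt htκ hκ1
    have hlogt : Real.log t ≤ 0 := Real.log_nonpos ht0.le ht1.le
    have hlow := low_t κ t ht0 htκ
    have hterm := term_le L hL0 m hm0'
    rw [← htdef] at hterm
    -- exponent bound
    have hexp : Real.exp (-(L * (t * (1 - Real.log t))))
        ≤ Real.exp (-(κ*(1-Real.log κ)*L)) * (L / (m:ℝ)) := by
      have h1 : L * (κ*(1-Real.log κ) - t*(1-Real.log t)) ≤ (κ*L - m) * (-Real.log t) := by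
        have := mul_le_mul_of_nonneg_left hlow hL0.le
        calc L * (κ*(1-Real.log κ) - t*(1-Real.log t)) ≤ L * ((κ - t) * (-Real.log t)) := this
          _ = (κ*L - m) * (-Real.log t) := by rw [htdef]; field_simp
      have h2 : (κ*L - m) * (-Real.log t) ≤ -Real.log t := by
        nlinarith [hmle, hmlt, hlogt]
      have h3 : -(L * (t * (1 - Real.log t))) ≤ -(κ*(1-Real.log κ)*L) + (-Real.log t) := by
        nlinarith [h1, h2]
      calc Real.exp (-(L * (t * (1 - Real.log t))))
          ≤ Real.exp (-(κ*(1-Real.log κ)*L) + (-Real.log t)) := Real.exp_le_exp.2 h3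
        _ = Real.exp (-(κ*(1-Real.log κ)*L)) * (L / (m:ℝ)) := by
            rw [Real.exp_add, Real.exp_neg, Real.exp_neg, Real.exp_log ht0, htdef, inv_div]
    have hLm : L / Real.sqrt m ≤ Real.sqrt 2 * Real.sqrt L / Real.sqrt κ := by
      have e1 : L / Real.sqrt m = Real.sqrt (L^2 / m) := by
        rw [Real.sqrt_div (by positivity) _, Real.sqrt_sq hL0.le]
      have e2 : Real.sqrt 2 * Real.sqrt L / Real.sqrt κ = Real.sqrt (2 * L / κ) := by
        rw [Real.sqrt_div (by positivity) _, Real.sqrt_mul (by norm_num)]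
      rw [e1, e2]
      apply Real.sqrt_le_sqrt
      rw [div_le_div_iff₀ hmR hκ0]
      have h1m : (1:ℝ) ≤ m := by exact_mod_cast hm1
      nlinarith [mul_lt_mul_of_pos_left hmlt hL0, h1m, hL0]
    have hsm : (0:ℝ) < Real.sqrt m := Real.sqrt_pos.2 hmR
    calc (Nat.factorial m : ℝ) / L ^ m
        ≤ Real.exp 1 * Real.sqrt m * Real.exp (-(L * (t * (1 - Real.log t)))) := hterm
      _ ≤ Real.exp 1 * Real.sqrt m * (Real.exp (-(κ*(1-Real.log κ)*L)) * (L / (m:ℝ))) := by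
          apply mul_le_mul_of_nonneg_left hexp (by positivity)
      _ = Real.exp 1 * (Real.sqrt m * (L / (m:ℝ))) * Real.exp (-(κ*(1-Real.log κ)*L)) := by
          ring
      _ = Real.exp 1 * (L / Real.sqrt m) * Real.exp (-(κ*(1-Real.log κ)*L)) := by
          have hthis : Real.sqrt m * (L / (m:ℝ)) = L / Real.sqrt m := by
            rw [eq_div_iff hsm.ne']
            have : Real.sqrt (m:ℝ) * (L / (m:ℝ)) * Real.sqrt (m:ℝ)
                = Real.sqrt (m:ℝ) * Real.sqrt (m:ℝ) * (L / (m:ℝ)) := by ring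
            rw [this, Real.mul_self_sqrt hmR.le]
            field_simp
          rw [hthis]
      _ ≤ Real.exp 1 * (Real.sqrt 2 * Real.sqrt L / Real.sqrt κ) * Real.exp (-(κ*(1-Real.log κ)*L)) := by
          apply mul_le_mul_of_nonneg_right _ (Real.exp_pos _).le
          exact mul_le_mul_of_nonneg_left hLm (Real.exp_pos _).le
      _ = Real.exp 1 * Real.sqrt 2 / Real.sqrt κ * Real.sqrt L * Real.exp (-(κ*(1-Real.log κ)*L)) := by
          ring

lemma tail_bound (κ L : ℝ) (hκ0 : 0 < κ) (hκ1 : κ < 1)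
    (hω1 : κ * (1 - Real.log κ) < 1) (hL : 1 ≤ L) :
    ∑ k ∈ Finset.Ico (⌊κ*L⌋₊+1) (⌊L⌋₊+1), (Nat.factorial k : ℝ) / L ^ k ≤
      3 * Real.exp 1 / (1-κ) * Real.sqrt L * Real.exp (-(κ*(1-Real.log κ)*L)) := by
  have hL0 : (0:ℝ) < L := lt_of_lt_of_le one_pos hL
  set ω : ℝ := κ * (1 - Real.log κ) with hωdef
  set m := ⌊κ*L⌋₊ with hmdef
  set n := ⌊L⌋₊ with hndef
  have h1κ : (0:ℝ) < 1 - κ := by linarith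
  have h1ω : (0:ℝ) < 1 - ω := by linarith
  set g : ℝ := (1 - ω) / (1 - κ) with hgdef
  have hg0 : 0 < g := div_pos h1ω h1κ
  set r : ℝ := Real.exp (-g) with hrdef
  have hr0 : 0 < r := Real.exp_pos _
  have hr1 : r < 1 := Real.exp_lt_one_iff.2 (by linarith)
  set E : ℝ := Real.exp (-(ω*L)) with hEdef
  have hE0 : 0 < E := Real.exp_pos _
  have hmlt : κ*L < m+1 := Nat.lt_floor_add_one _
  have hnle : (n:ℝ) ≤ L := Nat.floor_le hL0.le
  -- per-term bound
  have hterm : ∀ k ∈ Finset.Ico (m+1) (n+1), (Nat.factorial k : ℝ) / L ^ k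
      ≤ Real.exp 1 * Real.sqrt L * E * r ^ (k - (m+1)) := by
    intro k hk
    rw [Finset.mem_Ico] at hk
    obtain ⟨hk1, hk2⟩ := hk
    have hk0 : k ≠ 0 := by omega
    have hkR : (0:ℝ) < k := by exact_mod_cast Nat.pos_of_ne_zero hk0
    have hkL : (k:ℝ) ≤ L := by
      have : (k:ℝ) ≤ n := by exact_mod_cast Nat.lt_succ_iff.mp hk2
      linarith
    have hm1k : (m:ℝ) + 1 ≤ k := by exact_mod_cast hk1
    set t : ℝ := (k:ℝ)/L with htdef
    have htκ : κ ≤ t := by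
      rw [htdef, le_div_iff₀ hL0]; linarith
    have ht1 : t ≤ 1 := by rw [htdef, div_le_one hL0]; exact hkL
    have hchord := chord_le κ t hκ0 hκ1 htκ ht1
    have hexp : -(L * (t * (1 - Real.log t))) ≤ -(ω*L) + -(((k:ℝ) - (m+1)) * g) := by
      have h1 : ω + (t - κ) * g ≤ t * (1 - Real.log t) := by
        have he : ω + (t - κ) * g
            = κ*(1-Real.log κ) + (t-κ)*(1 - κ*(1-Real.log κ))/(1-κ) := by
          simp only [hωdef, hgdef]; ring
        rw [he]; exact hchord
      have h1' := mul_le_mul_of_nonneg_left h1 hL0.le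
      have h2 : ((k:ℝ) - (m+1)) * g ≤ (t - κ) * g * L := by
        have ht : (t - κ) * L = (k:ℝ) - κ*L := by rw [htdef]; field_simp
        have h3 : ((k:ℝ) - (m+1)) ≤ (k:ℝ) - κ*L := by linarith
        calc ((k:ℝ) - (m+1)) * g ≤ ((k:ℝ) - κ*L) * g :=
              mul_le_mul_of_nonneg_right h3 hg0.le
          _ = (t - κ) * g * L := by rw [← ht]; ring
      nlinarith [h1', h2]
    calc (Nat.factorial k : ℝ) / L ^ k
        ≤ Real.exp 1 * Real.sqrt k * Real.exp (-(L * (t * (1 - Real.log t)))) := by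
          have := term_le L hL0 k hk0; rw [← htdef] at this; exact this
      _ ≤ Real.exp 1 * Real.sqrt L * Real.exp (-(L * (t * (1 - Real.log t)))) := by
          apply mul_le_mul_of_nonneg_right _ (Real.exp_pos _).le
          exact mul_le_mul_of_nonneg_left (Real.sqrt_le_sqrt hkL) (Real.exp_pos _).le
      _ ≤ Real.exp 1 * Real.sqrt L * (E * r ^ (k - (m+1))) := by
          apply mul_le_mul_of_nonneg_left _ (by positivity)
          rw [hEdef, hrdef, ← Real.exp_nat_mul, ← Real.exp_add]
          apply Real.exp_le_exp.2
          have hcast : ((k - (m+1) : ℕ) : ℝ) = (k:ℝ) - (m+1) := by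
            have : m + 1 ≤ k := hk1
            push_cast [this]; ring
          rw [hcast]
          calc -(L * (t * (1 - Real.log t))) ≤ -(ω*L) + -(((k:ℝ) - (m+1)) * g) := hexp
            _ = -(ω * L) + ((k:ℝ) - ((m:ℝ) + 1)) * -g := by ring
      _ = Real.exp 1 * Real.sqrt L * E * r ^ (k - (m+1)) := by ring
  calc ∑ k ∈ Finset.Ico (m+1) (n+1), (Nat.factorial k : ℝ) / L ^ k
      ≤ ∑ k ∈ Finset.Ico (m+1) (n+1), Real.exp 1 * Real.sqrt L * E * r ^ (k - (m+1)) :=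
        Finset.sum_le_sum hterm
    _ = Real.exp 1 * Real.sqrt L * E * ∑ k ∈ Finset.Ico (m+1) (n+1), r ^ (k - (m+1)) := by
        rw [Finset.mul_sum]
    _ ≤ Real.exp 1 * Real.sqrt L * E * (1 / (1 - r)) := by
        apply mul_le_mul_of_nonneg_left _ (by positivity)
        rw [Finset.sum_Ico_eq_sum_range]
        have : ∀ j ∈ Finset.range ((n+1) - (m+1)), r ^ ((m+1) + j - (m+1)) = r ^ j := by
          intro j _; congr 1; omega
        rw [Finset.sum_congr rfl this, geom_sum_eq hr1.ne]
        rw [show (r ^ ((n+1)-(m+1)) - 1) / (r - 1) = (1 - r ^ ((n+1)-(m+1))) / (1 - r) by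
          rw [← neg_div_neg_eq]; ring_nf]
        rw [div_le_div_iff₀ (by linarith) (by linarith)]
        nlinarith [pow_pos hr0 ((n+1)-(m+1)), pow_le_one₀ hr0.le hr1.le (n := (n+1)-(m+1))]
    _ ≤ Real.exp 1 * Real.sqrt L * E * (3 / (1 - κ)) := by
        apply mul_le_mul_of_nonneg_left _ (by positivity)
        have hω2 : (1-κ)^2 ≤ 2*(1-ω) := by
          have := kappa_sq κ hκ0 hκ1.le
          simp only [hωdef]; nlinarith [this]
        have hrle : r ≤ (1 + g)⁻¹ := by
          have h := Real.add_one_le_exp g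
          rw [hrdef, Real.exp_neg]
          exact inv_anti₀ (by linarith) (by linarith)
        have hgeq : g / (1 + g) ≤ 1 - r := by
          have : (1+g)⁻¹ = 1 - g/(1+g) := by field_simp; ring
          rw [this] at hrle; linarith
        have hpos1 : 0 < g / (1 + g) := by positivity
        calc 1 / (1 - r) ≤ 1 / (g / (1 + g)) := by
              apply one_div_le_one_div_of_le hpos1 hgeq
          _ = 1 + 1/g := by rw [one_div_div, add_div, div_self hg0.ne']; ring
          _ = 1 + (1-κ)/(1-ω) := by rw [hgdef, one_div_div]
          _ ≤ 1/(1-κ) + 2/(1-κ) := by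
              have k1 : (1:ℝ) ≤ 1/(1-κ) := by
                rw [le_div_iff₀ h1κ]; linarith
              have k2 : (1-κ)/(1-ω) ≤ 2/(1-κ) := by
                rw [div_le_div_iff₀ h1ω h1κ]; nlinarith [hω2]
              linarith
          _ = 3/(1-κ) := by rw [← add_div]; norm_num
    _ = 3 * Real.exp 1 / (1-κ) * Real.sqrt L * Real.exp (-(ω*L)) := by
        rw [hEdef]; ring

lemma const_le (κ : ℝ) (hκ0 : 0 < κ) (hκ1 : κ < 1) :
    Real.exp 1 * Real.sqrt 2 / Real.sqrt κ + 3 * Real.exp 1 / (1-κ) ≤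
      Real.sqrt (8 * Real.pi / κ) * Real.exp (13/12) * (1 + κ) / (1 - κ) := by
  have h1κ : (0:ℝ) < 1 - κ := by linarith
  have hsκ : (0:ℝ) < Real.sqrt κ := Real.sqrt_pos.2 hκ0
  have h8 : Real.sqrt (8 * Real.pi / κ) = Real.sqrt (8 * Real.pi) / Real.sqrt κ :=
    Real.sqrt_div (by positivity) _
  have hRHS : Real.sqrt (8 * Real.pi / κ) * Real.exp (13/12) * (1 + κ) / (1 - κ)
      = Real.sqrt (8 * Real.pi) * Real.exp (13/12) * (1 + κ) / (Real.sqrt κ * (1 - κ)) := by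
    rw [h8]; field_simp
  have hLHS : Real.exp 1 * Real.sqrt 2 / Real.sqrt κ + 3 * Real.exp 1 / (1-κ)
      = (Real.exp 1 * Real.sqrt 2 * (1-κ) + 3 * Real.exp 1 * Real.sqrt κ)
        / (Real.sqrt κ * (1 - κ)) := by
    field_simp
  rw [hRHS, hLHS]
  have hsqrt2 : Real.sqrt 2 ≤ 1.415 := by
    rw [show (1.415:ℝ) = Real.sqrt (1.415^2) by rw [Real.sqrt_sq]; norm_num]
    exact Real.sqrt_le_sqrt (by norm_num)
  have hsqrtpi : (5:ℝ) ≤ Real.sqrt (8 * Real.pi) := by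
    rw [show (5:ℝ) = Real.sqrt 25 by rw [show (25:ℝ) = 5^2 by norm_num, Real.sqrt_sq]; norm_num]
    exact Real.sqrt_le_sqrt (by nlinarith [Real.pi_gt_d6])
  have he1 : Real.exp 1 ≤ 2.7182818286 := Real.exp_one_lt_d9.le
  have he2 : Real.exp 1 ≤ Real.exp (13/12) := Real.exp_le_exp.2 (by norm_num)
  have hκs1 : Real.sqrt κ ≤ 1 := by
    rw [show (1:ℝ) = Real.sqrt 1 by simp]
    exact Real.sqrt_le_sqrt hκ1.le
  gcongr ?_ / ?_
  · calc Real.exp 1 * Real.sqrt 2 * (1-κ) + 3 * Real.exp 1 * Real.sqrt κ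
        ≤ Real.exp 1 * Real.sqrt 2 + 3 * Real.exp 1 := by
          have f1 : 0 ≤ Real.exp 1 * Real.sqrt 2 * κ := by positivity
          have f2 : 3 * Real.exp 1 * Real.sqrt κ ≤ 3 * Real.exp 1 * 1 :=
            mul_le_mul_of_nonneg_left hκs1 (by positivity)
          nlinarith [f1, f2]
      _ ≤ 5 * Real.exp (13/12) := by
          have f3 : Real.exp 1 * Real.sqrt 2 ≤ 2.7182818286 * 1.415 :=
            mul_le_mul he1 hsqrt2 (Real.sqrt_nonneg 2) (by norm_num)
          have f4 := Real.exp_one_gt_d9.le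
          linarith [he2, f3, f4]
      _ ≤ Real.sqrt (8 * Real.pi) * Real.exp (13/12) * (1 + κ) := by
          have f5 : 5 * Real.exp (13/12) ≤ Real.sqrt (8*Real.pi) * Real.exp (13/12) :=
            mul_le_mul_of_nonneg_right hsqrtpi (Real.exp_pos _).le
          have f6 : 0 ≤ Real.sqrt (8*Real.pi) * Real.exp (13/12) * κ := by positivity
          nlinarith [f5, f6]

set_option maxHeartbeats 1000000 in
/-- For `0 < ω < 1`, `κ̲ ∈ (0,1)` the solution of `κ(1−log κ) = ω`,
every real `x ≥ e`, `m̲ = ⌊κ̲·log x⌋`, `α̲ = κ̲·log x − m̲`, and `α ∈ {0, α̲}`,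
one has `0 ≤ li_*(x) − li_{ω̲,α}(x) ≤ D̲·x^(1−ω)/√(log x)` with
`D̲ = √(8π/κ̲)·e^(13/12)·(1+κ̲)/(1−κ̲)`. -/
theorem liStar_sub_liApprox_lower_le_D (ω κ : ℝ) (hω0 : 0 < ω) (hω1 : ω < 1)
    (hκ0 : 0 < κ) (hκ1 : κ < 1) (hsol : κ * (1 - Real.log κ) = ω)
    (x : ℝ) (hx : Real.exp 1 ≤ x) (α : ℝ)
    (hα : α = 0 ∨ α = κ * Real.log x - ⌊κ * Real.log x⌋₊) :
    0 ≤ liStar x - liApprox κ α x ∧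
      liStar x - liApprox κ α x ≤
        Real.sqrt (8 * Real.pi / κ) * Real.exp (13 / 12) * (1 + κ) / (1 - κ)
          * x ^ (1 - ω) / Real.sqrt (Real.log x) := by
  subst hsol
  have hx0 : 0 < x := lt_of_lt_of_le (Real.exp_pos 1) hx
  have hL1 : 1 ≤ Real.log x := by
    calc (1:ℝ) = Real.log (Real.exp 1) := (Real.log_exp 1).symm
      _ ≤ Real.log x := Real.log_le_log (Real.exp_pos 1) hx
  set L : ℝ := Real.log x with hLdef
  have hL0 : (0:ℝ) < L := lt_of_lt_of_le one_pos hL1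
  set m := ⌊κ*L⌋₊ with hmdef
  set n := ⌊L⌋₊ with hndef
  have hκL0 : (0:ℝ) ≤ κ * L := by positivity
  have hmn : m ≤ n := Nat.floor_mono (by nlinarith)
  have hmle : (m:ℝ) ≤ κ*L := Nat.floor_le hκL0
  have hmlt : κ*L < m+1 := Nat.lt_floor_add_one _
  have hnle : (n:ℝ) ≤ L := Nat.floor_le hL0.le
  have hnlt : L < n+1 := Nat.lt_floor_add_one _
  have hα0 : 0 ≤ α := by
    rcases hα with rfl | rfl
    · exact le_refl 0
    · linarith [hmle]
  have hα1 : α ≤ 1 := by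
    rcases hα with rfl | rfl
    · norm_num
    · linarith [hmlt]
  have hκLL : κ * L ≤ L := by nlinarith
  -- the key decomposition
  have hsub : ∑ k ∈ Finset.Ico m n, (Nat.factorial k : ℝ) / L ^ k
      = ∑ k ∈ Finset.range n, (Nat.factorial k : ℝ) / L ^ k
        - ∑ k ∈ Finset.range m, (Nat.factorial k : ℝ) / L ^ k :=
    Finset.sum_Ico_eq_sub _ hmn
  have key : liStar x - liApprox κ α x
      = x / L * ((∑ k ∈ Finset.Ico m n, (Nat.factorial k : ℝ) / L ^ k)
          - α * (Nat.factorial m : ℝ) / L ^ m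
          + (L - n) * ((Nat.factorial n : ℝ) / L ^ n)) := by
    rw [liStar, liApprox, hsub, ← hLdef, ← hmdef, ← hndef, pow_succ]
    field_simp
    ring
  set E : ℝ := Real.exp (-(κ*(1-Real.log κ)*L)) with hEdef
  have hE0 : (0:ℝ) < E := Real.exp_pos _
  have hq : (0:ℝ) ≤ (Nat.factorial n : ℝ) / L ^ n := by positivity
  have hqm : (0:ℝ) ≤ (Nat.factorial m : ℝ) / L ^ m := by positivity
  -- nonnegativity
  have hT0 : 0 ≤ (∑ k ∈ Finset.Ico m n, (Nat.factorial k : ℝ) / L ^ k)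
      - α * (Nat.factorial m : ℝ) / L ^ m
      + (L - n) * ((Nat.factorial n : ℝ) / L ^ n) := by
    rcases eq_or_lt_of_le hmn with heq | hlt
    · rw [heq, Finset.Ico_self, Finset.sum_empty]
      have hmnR : (m:ℝ) = (n:ℝ) := by exact_mod_cast congrArg Nat.cast heq
      have hαn : α ≤ L - n := by
        rcases hα with rfl | rfl
        · linarith
        · linarith [hκLL, hmnR]
      rw [mul_div_assoc]
      nlinarith [hq, hαn]
    · have hmem : m ∈ Finset.Ico m n := Finset.mem_Ico.2 ⟨le_refl m, hlt⟩
      have hsingle : (Nat.factorial m : ℝ) / L ^ m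
          ≤ ∑ k ∈ Finset.Ico m n, (Nat.factorial k : ℝ) / L ^ k :=
        Finset.single_le_sum (f := fun k => (Nat.factorial k : ℝ) / L ^ k) (fun k _ => by positivity) hmem
      have hLn : (0:ℝ) ≤ L - n := by linarith
      have hα' : α * (Nat.factorial m : ℝ) / L ^ m ≤ (Nat.factorial m : ℝ) / L ^ m := by
        rw [mul_div_assoc]
        nlinarith [hqm, hα1, hα0]
      linarith [hsingle, hα', mul_nonneg hLn hq]
  constructor
  · rw [key]
    exact mul_nonneg (by positivity) hT0
  · rw [key]
    -- bound T by the head+tail sums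
    have hT : (∑ k ∈ Finset.Ico m n, (Nat.factorial k : ℝ) / L ^ k)
        - α * (Nat.factorial m : ℝ) / L ^ m
        + (L - n) * ((Nat.factorial n : ℝ) / L ^ n)
        ≤ ∑ k ∈ Finset.Ico m (n+1), (Nat.factorial k : ℝ) / L ^ k := by
      rw [Finset.sum_Ico_succ_top hmn]
      have h1 : (L - n) * ((Nat.factorial n : ℝ) / L ^ n) ≤ (Nat.factorial n : ℝ) / L ^ n := by
        have hle1 : L - n ≤ 1 := by linarith
        calc (L - n) * ((Nat.factorial n : ℝ) / L ^ n)
            ≤ 1 * ((Nat.factorial n : ℝ) / L ^ n) := mul_le_mul_of_nonneg_right hle1 hq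
          _ = (Nat.factorial n : ℝ) / L ^ n := one_mul _
      have h2 : 0 ≤ α * (Nat.factorial m : ℝ) / L ^ m := by
        rw [mul_div_assoc]; exact mul_nonneg hα0 hqm
      linarith
    have hsplit : ∑ k ∈ Finset.Ico m (n+1), (Nat.factorial k : ℝ) / L ^ k
        = (Nat.factorial m : ℝ) / L ^ m
          + ∑ k ∈ Finset.Ico (m+1) (n+1), (Nat.factorial k : ℝ) / L ^ k :=
      Finset.sum_eq_sum_Ico_succ_bot (Nat.lt_succ_of_le hmn) _
    have hhead := head_bound κ L hκ0 hκ1 hL1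
    have htail := tail_bound κ L hκ0 hκ1 hω1 hL1
    rw [← hmdef, ← hEdef] at hhead
    rw [← hmdef, ← hndef, ← hEdef] at htail
    have hconst := const_le κ hκ0 hκ1
    have hbound : (∑ k ∈ Finset.Ico m n, (Nat.factorial k : ℝ) / L ^ k)
        - α * (Nat.factorial m : ℝ) / L ^ m
        + (L - n) * ((Nat.factorial n : ℝ) / L ^ n)
        ≤ Real.sqrt (8 * Real.pi / κ) * Real.exp (13/12) * (1 + κ) / (1 - κ)
          * (Real.sqrt L * E) := by
      calc (∑ k ∈ Finset.Ico m n, (Nat.factorial k : ℝ) / L ^ k)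
          - α * (Nat.factorial m : ℝ) / L ^ m
          + (L - n) * ((Nat.factorial n : ℝ) / L ^ n)
          ≤ ∑ k ∈ Finset.Ico m (n+1), (Nat.factorial k : ℝ) / L ^ k := hT
        _ = (Nat.factorial m : ℝ) / L ^ m
            + ∑ k ∈ Finset.Ico (m+1) (n+1), (Nat.factorial k : ℝ) / L ^ k := hsplit
        _ ≤ Real.exp 1 * Real.sqrt 2 / Real.sqrt κ * Real.sqrt L * E
            + 3 * Real.exp 1 / (1-κ) * Real.sqrt L * E := add_le_add hhead htail
        _ = (Real.exp 1 * Real.sqrt 2 / Real.sqrt κ + 3 * Real.exp 1 / (1-κ))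
            * (Real.sqrt L * E) := by ring
        _ ≤ Real.sqrt (8 * Real.pi / κ) * Real.exp (13/12) * (1 + κ) / (1 - κ)
            * (Real.sqrt L * E) := by
            apply mul_le_mul_of_nonneg_right hconst (by positivity)
    have hfin : x / L * (Real.sqrt (8 * Real.pi / κ) * Real.exp (13/12) * (1 + κ) / (1 - κ)
          * (Real.sqrt L * E))
        = Real.sqrt (8 * Real.pi / κ) * Real.exp (13 / 12) * (1 + κ) / (1 - κ)
          * x ^ (1 - κ * (1 - Real.log κ)) / Real.sqrt L := by
      have hxE : x * E = x ^ (1 - κ * (1 - Real.log κ)) := by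
        rw [Real.rpow_def_of_pos hx0, ← hLdef, hEdef]
        rw [show x = Real.exp L from (Real.exp_log hx0).symm]
        rw [← Real.exp_add]
        congr 1
        ring
      calc x / L * (Real.sqrt (8 * Real.pi / κ) * Real.exp (13/12) * (1 + κ) / (1 - κ)
              * (Real.sqrt L * E))
          = Real.sqrt (8 * Real.pi / κ) * Real.exp (13/12) * (1 + κ) / (1 - κ)
            * (x * E) * (Real.sqrt L / L) := by ring
        _ = Real.sqrt (8 * Real.pi / κ) * Real.exp (13 / 12) * (1 + κ) / (1 - κ)
            * x ^ (1 - κ * (1 - Real.log κ)) / Real.sqrt L := by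
            rw [hxE, Real.sqrt_div_self', mul_one_div]
    rw [← hfin]
    exact mul_le_mul_of_nonneg_left hbound (by positivity)
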